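/- Let G₁, G₂ be groups of prime order p with bilinear pairing e, P ∈ G₁, y ∈ G₂, and Q, Q* ∈ G₁, s, s*, m, r ∈ ZMod p such that e(P,Q)·y^s = e(P,Q*)·y^(s*). Define R* = R · (Q · Q*⁻¹)^m and r* = r + m·(s − s*) for any R ∈ G₁. Then: (i) e(P,R)·y^r = e(P,R*)·y^(r*); (ii) R · Q^m = R* · Q*^m; (iii) r + m·s = r* + m·s*. (Perfect witness indistinguishability of Protocol 5.) -/

import Mathlib

lemma zpow_congr_card {p : ℕ} [NeZero p] {G : Type*} [Group G] [Fintype G]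
    (hc : Fintype.card G = p) (x : G) {i j : ℤ} (h : (i : ZMod p) = j) :
    x ^ i = x ^ j := by
  have hd : (p : ℤ) ∣ i - j := by
    rwa [← ZMod.intCast_zmod_eq_zero_iff_dvd, Int.cast_sub, sub_eq_zero]
  have ho : (orderOf x : ℤ) ∣ i - j :=
    dvd_trans (Int.natCast_dvd_natCast.mpr (hc ▸ orderOf_dvd_card)) hd
  have h1 : x ^ (i - j) = 1 := orderOf_dvd_iff_zpow_eq_one.mp ho
  calc x ^ i = x ^ (j + (i - j)) := by ring_nf
    _ = x ^ j * x ^ (i - j) := zpow_add x _ _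
    _ = x ^ j := by rw [h1, mul_one]

theorem stmt_12 {p : ℕ} [Fact p.Prime] {G₁ G₂ : Type*} [CommGroup G₁] [CommGroup G₂]
    [Fintype G₁] [Fintype G₂]
    (hc₁ : Fintype.card G₁ = p) (hc₂ : Fintype.card G₂ = p)
    (e : G₁ → G₁ → G₂)
    (hbil : ∀ (a b : G₁) (i j : ℤ), e (a ^ i) (b ^ j) = (e a b) ^ (i * j))
    (P R Q Qs : G₁) (y : G₂) (s ss m r : ZMod p)
    (hkey : e P Q * y ^ s.val = e P Qs * y ^ ss.val)
    (Rs : G₁) (hRs : Rs = R * (Q * Qs⁻¹) ^ m.val)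
    (rs : ZMod p) (hrs : rs = r + m * (s - ss)) :
    e P R * y ^ r.val = e P Rs * y ^ rs.val ∧
      R * Q ^ m.val = Rs * Qs ^ m.val ∧
      r + m * s = rs + m * ss := by
  have hcyc : IsCyclic G₁ :=
    isCyclic_of_prime_card (p := p) (by rw [Nat.card_eq_fintype_card, hc₁])
  obtain ⟨g, hg⟩ := hcyc.exists_generator
  obtain ⟨a, ha⟩ := hg Q
  obtain ⟨b, hb⟩ := hg Qs
  obtain ⟨c, hcR⟩ := hg R
  set k : ℤ := (m.val : ℤ) with hk
  set t : G₂ := e P g with ht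
  have hePg : ∀ i : ℤ, e P (g ^ i) = t ^ i := by
    intro i
    have := hbil P g 1 i
    simpa using this
  have hQ : Q = g ^ a := ha.symm
  have hQs : Qs = g ^ b := hb.symm
  have hR : R = g ^ c := hcR.symm
  have hRs' : Rs = g ^ (c + k * (a - b)) := by
    rw [hRs, hR, hQ, hQs, ← zpow_neg, ← zpow_add, ← zpow_natCast, ← zpow_mul, ← zpow_add]
    ring_nf
    rfl
  have hyv : ∀ u : ZMod p, y ^ u.val = y ^ ((u.val : ℤ)) := fun u => (zpow_natCast y u.val).symm
  have hkey' : t ^ a * y ^ ((s.val : ℤ)) = t ^ b * y ^ ((ss.val : ℤ)) := by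
    rw [← hyv, ← hyv, ← hePg, ← hePg, ← hQ, ← hQs]; exact hkey
  have hta : t ^ a = t ^ b * y ^ ((ss.val : ℤ)) * (y ^ ((s.val : ℤ)))⁻¹ :=
    eq_mul_inv_iff_mul_eq.mpr hkey'
  have hdiff : t ^ (a - b) = y ^ ((ss.val : ℤ) - (s.val : ℤ)) := by
    rw [sub_eq_add_neg, zpow_add, zpow_neg, hta, sub_eq_add_neg, zpow_add, zpow_neg]
    simp [mul_comm, mul_left_comm, mul_assoc]
  refine ⟨?_, ?_, ?_⟩
  · rw [hR, hRs', hePg, hePg, hyv r, hyv rs]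
    have hexp : t ^ (c + k * (a - b)) = t ^ c * y ^ (k * ((ss.val:ℤ) - s.val)) := by
      rw [zpow_add, mul_comm k (a - b), zpow_mul, hdiff, ← zpow_mul,
        mul_comm ((ss.val:ℤ) - s.val) k]
    rw [hexp]
    have hy2 : y ^ ((r.val : ℤ)) = y ^ (k * ((ss.val:ℤ) - s.val) + (rs.val : ℤ)) := by
      apply zpow_congr_card hc₂
      have hcast : ∀ u : ZMod p, (((u.val : ℤ)) : ZMod p) = u := by
        intro u; push_cast [ZMod.natCast_val]; simp
      push_cast [hcast]
      rw [hk, hcast m]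
      rw [hrs]; ring
    rw [mul_assoc, ← zpow_add, ← hy2]
  · rw [hRs, mul_pow, inv_pow]
    group
  · rw [hrs]; ring
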